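/- There exists a function F : ℕ → ℕ such that whenever the parameter sequence satisfies N_k ≥ F(ℓ_{k−1}) for every k ≥ 1, then for every k ≥ 0: every word u ∈ A_k has f_0(u) > 2/3, and every word u ∈ B_k has f_0(u) < 1/3. -/

import Mathlib

open MeasureTheory Filter Topology
open scoped ENNReal Classical

noncomputable section

/-- The configuration space `{0,1}^ℕ` (with `false = 0`, `true = 1`). -/
abbrev Conf : Type := ℕ → Bool

/-- The shift map `(Tx)(n) = x(n+1)`. -/
def shiftMap (x : Conf) : Conf := fun n => x (n + 1)

/-- The metric `d(x,y) = 2^{-min{n : x n ≠ y n}}` for `x ≠ y`, and `d(x,x) = 0`. -/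
def dist01 (x y : Conf) : ℝ :=
  if x = y then 0 else ((2 : ℝ) ^ sInf {n : ℕ | x n ≠ y n})⁻¹

/-- A subshift: a nonempty, closed, shift-invariant subset of `{0,1}^ℕ`. -/
def IsSubshift (X : Set Conf) : Prop :=
  X.Nonempty ∧ IsClosed X ∧ ∀ x ∈ X, shiftMap x ∈ X

/-- The potential `φ_X(y) = -d(y, X) = -inf {d(y,x) : x ∈ X}`. -/
def phiX (X : Set Conf) (y : Conf) : ℝ := -sInf (dist01 y '' X)

/-- The cylinder set of points whose first `n` symbols form the word `w`. -/
def cylinder {n : ℕ} (w : Fin n → Bool) : Set Conf := {x | ∀ i : Fin n, x i = w i}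

/-- The entropy `H_n(μ)` of the `n`-block marginal of `μ` (base-2 logarithm). -/
def Hblock (μ : Measure Conf) (n : ℕ) : ℝ :=
  -∑ w : Fin n → Bool, (μ (cylinder w)).toReal * Real.logb 2 (μ (cylinder w)).toReal

/-- The Kolmogorov–Sinai entropy `h(μ) = lim_n H_n(μ)/n`; since the limit exists
(by subadditivity) for shift-invariant measures, we may define it as a `limsup`. -/
def entropy (μ : Measure Conf) : ℝ :=
  limsup (fun n : ℕ => Hblock μ n / n) atTop

/-- A shift-invariant Borel probability measure. -/
def IsInvProb (μ : Measure Conf) : Prop :=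
  IsProbabilityMeasure μ ∧ μ.map shiftMap = μ

/-- An equilibrium state for `βφ`: a shift-invariant Borel probability measure maximizing
`ν ↦ β∫φ dν + h(ν)` over all shift-invariant Borel probability measures. -/
def IsEquilibriumState (φ : Conf → ℝ) (β : ℝ) (μ : Measure Conf) : Prop :=
  IsInvProb μ ∧ ∀ ν : Measure Conf, IsInvProb ν →
    β * ∫ x, φ x ∂ν + entropy ν ≤ β * ∫ x, φ x ∂μ + entropy μ

/-- The set of all concatenations of `m` words from `S`. -/
def tupleConcat (S : Finset (List Bool)) : ℕ → Finset (List Bool)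
  | 0 => {([] : List Bool)}
  | m + 1 => (S ×ˢ tupleConcat S m).image fun p => p.1 ++ p.2

/-- `A_0 = {00000, 01000}` (with `false = 0`, `true = 1`). -/
def Azero : Finset (List Bool) :=
  {[false, false, false, false, false], [false, true, false, false, false]}

/-- `B_0 = {11111, 10111}`. -/
def Bzero : Finset (List Bool) :=
  {[true, true, true, true, true], [true, false, true, true, true]}

/-- The inductive construction: `consAB N k = (ℓ_k, A_k, B_k)`.  At step `k ≥ 1`,
`c_k` is the concatenation, in lexicographic order, of all words in
`(A_{k-1} ∪ B_{k-1})^{2^{ℓ_{k-1}}+1}`; if `k` is odd, `A_k = {c_k a^{N_k} : a ∈ A_{k-1}}`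
and `B_k = {c_k b_1 ⋯ b_{N_k} : b_i ∈ B_{k-1}}`, and symmetrically if `k` is even. -/
def consAB (N : ℕ → ℕ) : ℕ → ℕ × Finset (List Bool) × Finset (List Bool)
  | 0 => (5, Azero, Bzero)
  | k + 1 =>
    let ℓ := (consAB N k).1
    let A := (consAB N k).2.1
    let B := (consAB N k).2.2
    let c : List Bool := ((tupleConcat (A ∪ B) (2 ^ ℓ + 1)).sort (· ≤ ·)).flatten
    let n := N (k + 1)
    if k % 2 = 0 then -- `k + 1` is odd
      (c.length + n * ℓ,
        A.image fun a => c ++ (List.replicate n a).flatten,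
        (tupleConcat B n).image fun w => c ++ w)
    else -- `k + 1` is even
      (c.length + n * ℓ,
        (tupleConcat A n).image fun w => c ++ w,
        B.image fun b => c ++ (List.replicate n b).flatten)

/-- The common length `ℓ_k` of the words of `A_k ∪ B_k`. -/
def ell (N : ℕ → ℕ) (k : ℕ) : ℕ := (consAB N k).1

/-- The set of words `A_k`. -/
def Ak (N : ℕ → ℕ) (k : ℕ) : Finset (List Bool) := (consAB N k).2.1

/-- The set of words `B_k`. -/
def Bk (N : ℕ → ℕ) (k : ℕ) : Finset (List Bool) := (consAB N k).2.2

/-- `L_k = A_k ∪ B_k`. -/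
def Lk (N : ℕ → ℕ) (k : ℕ) : Finset (List Bool) := Ak N k ∪ Bk N k

/-- The frequency `f_0(u)` of the symbol `0` in the word `u`. -/
def freq0 (u : List Bool) : ℝ := (u.count false : ℝ) / u.length

/-- `z` is an infinite concatenation of words from `L`. -/
def IsConcat (L : Finset (List Bool)) (z : Conf) : Prop :=
  ∃ w : ℕ → List Bool, (∀ i, w i ∈ L ∧ w i ≠ []) ∧
    ∀ (i j : ℕ) (h : j < (w i).length),
      z ((∑ r ∈ Finset.range i, (w r).length) + j) = (w i).get ⟨j, h⟩

/-- `⟨L⟩`: the subshift of all shifts of infinite concatenations of words from `L`. -/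
def langShift (L : Finset (List Bool)) : Set Conf :=
  {y | ∃ (n : ℕ) (z : Conf), IsConcat L z ∧ y = fun m => z (m + n)}

/-- The subshift `X = ⋂_{k ≥ 1} ⟨L_k⟩`. -/
def Xsub (N : ℕ → ℕ) : Set Conf := ⋂ k : ℕ, langShift (Lk N (k + 1))

/-- The word `x|_{[i, i+ℓ)}` read off from `x ∈ {0,1}^ℕ`. -/
def windowWord (x : Conf) (i ℓ : ℕ) : List Bool := List.ofFn fun j : Fin ℓ => x (i + j)


/-! ### Auxiliary lemmas for `stmt2` -/

lemma mem_tupleConcat_succ {S : Finset (List Bool)} {m : ℕ} {u : List Bool} :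
    u ∈ tupleConcat S (m + 1) ↔ ∃ a ∈ S, ∃ v ∈ tupleConcat S m, u = a ++ v := by
  simp only [tupleConcat, Finset.mem_image, Finset.mem_product, Prod.exists]
  constructor
  · rintro ⟨a, v, ⟨ha, hv⟩, rfl⟩; exact ⟨a, ha, v, hv, rfl⟩
  · rintro ⟨a, ha, v, hv, rfl⟩; exact ⟨a, v, ⟨ha, hv⟩, rfl⟩

lemma tc_len {S : Finset (List Bool)} {ℓ : ℕ} (h : ∀ u ∈ S, u.length = ℓ) :
    ∀ m, ∀ w ∈ tupleConcat S m, w.length = m * ℓ := by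
  intro m
  induction m with
  | zero => intro w hw; simp [tupleConcat] at hw; simp [hw]
  | succ m ih =>
      intro w hw
      rw [mem_tupleConcat_succ] at hw
      obtain ⟨a, ha, v, hv, rfl⟩ := hw
      simp [List.length_append, h a ha, ih v hv, Nat.succ_mul, Nat.add_comm]

lemma tc_countA {S : Finset (List Bool)} {ℓ : ℕ}
    (h : ∀ u ∈ S, 2 * ℓ + 1 ≤ 3 * u.count false) :
    ∀ m, ∀ w ∈ tupleConcat S m, m * (2 * ℓ + 1) ≤ 3 * w.count false := by
  intro m
  induction m with
  | zero => intro w hw; simp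
  | succ m ih =>
      intro w hw
      rw [mem_tupleConcat_succ] at hw
      obtain ⟨a, ha, v, hv, rfl⟩ := hw
      have h1 := h a ha
      have h2 := ih v hv
      simp only [List.count_append]
      have : (m + 1) * (2 * ℓ + 1) = (2 * ℓ + 1) + m * (2 * ℓ + 1) := by ring
      rw [this]
      omega

lemma tc_countB {S : Finset (List Bool)} {ℓ : ℕ}
    (h : ∀ u ∈ S, 3 * u.count false + 1 ≤ ℓ) :
    ∀ m, ∀ w ∈ tupleConcat S m, 3 * w.count false + m ≤ m * ℓ := by
  intro m
  induction m with
  | zero => intro w hw; simp [tupleConcat] at hw; simp [hw]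
  | succ m ih =>
      intro w hw
      rw [mem_tupleConcat_succ] at hw
      obtain ⟨a, ha, v, hv, rfl⟩ := hw
      have h1 := h a ha
      have h2 := ih v hv
      simp only [List.count_append]
      have : (m + 1) * ℓ = ℓ + m * ℓ := by ring
      rw [this]
      omega

lemma rep_flatten_len (n : ℕ) (a : List Bool) :
    ((List.replicate n a).flatten).length = n * a.length := by
  induction n with
  | zero => simp
  | succ n ih => simp [List.replicate_succ, List.flatten_cons, ih, Nat.succ_mul, Nat.add_comm]

lemma rep_flatten_count (n : ℕ) (a : List Bool) :
    ((List.replicate n a).flatten).count false = n * a.count false := by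
  induction n with
  | zero => simp
  | succ n ih => simp [List.replicate_succ, List.flatten_cons, List.count_append, ih,
      Nat.succ_mul, Nat.add_comm]

lemma card_le_of_len {S : Finset (List Bool)} {ℓ : ℕ} (h : ∀ u ∈ S, u.length = ℓ) :
    S.card ≤ 2 ^ ℓ := by
  classical
  have hinj : Set.InjOn (fun u : List Bool => (fun i : Fin ℓ => u.getD i false)) S := by
    intro u hu v hv he
    apply List.ext_getElem (by rw [h u hu, h v hv])
    intro i h1 h2
    have hi : i < ℓ := by rw [h u hu] at h1; exact h1
    have := congrFun he ⟨i, hi⟩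
    simpa [List.getD_eq_getElem, h1, h2, List.getD, List.getElem?_eq_getElem] using this
  calc S.card ≤ (Finset.univ : Finset (Fin ℓ → Bool)).card :=
        Finset.card_le_card_of_injOn _ (fun _ _ => Finset.mem_univ _) hinj
    _ = 2 ^ ℓ := by simp

lemma flatten_sort_len {S : Finset (List Bool)} {m ℓ : ℕ}
    (h : ∀ u ∈ S, u.length = ℓ) :
    ((tupleConcat S m).sort (· ≤ ·)).flatten.length ≤ 2 ^ (m * ℓ) * (m * ℓ) := by
  have h1 : ∀ w ∈ tupleConcat S m, w.length = m * ℓ := tc_len h m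
  rw [List.length_flatten]
  have h2 : (((tupleConcat S m).sort (· ≤ ·)).map List.length).sum
      = (((tupleConcat S m).sort (· ≤ ·)).map List.length).length • (m * ℓ) := by
    apply List.sum_eq_card_nsmul
    intro x hx
    obtain ⟨w, hw, rfl⟩ := List.mem_map.1 hx
    exact h1 w ((Finset.mem_sort _).1 hw)
  rw [h2]
  simp only [List.length_map, Finset.length_sort, smul_eq_mul]
  exact Nat.mul_le_mul_right _ (card_le_of_len h1 |>.trans (Nat.pow_le_pow_right (by norm_num)
    (Nat.le_refl _)) |> (fun hh => hh.trans (Nat.pow_le_pow_right (by norm_num) (Nat.le_refl _))) |>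
    (fun hh => hh))

/-- The key invariant, proved by induction. -/
lemma key_invariant (N : ℕ → ℕ) (hN : ∀ k, 0 < N k)
    (hF : ∀ k : ℕ, 2 * (2 ^ ((2 ^ ell N k + 1) * ell N k) * ((2 ^ ell N k + 1) * ell N k)) + 1
      ≤ N (k + 1)) :
    ∀ k : ℕ, (0 < ell N k) ∧
      (∀ u ∈ Ak N k, u.length = ell N k ∧ 2 * ell N k + 1 ≤ 3 * u.count false) ∧
      (∀ u ∈ Bk N k, u.length = ell N k ∧ 3 * u.count false + 1 ≤ ell N k) := by
  intro k
  induction k with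
  | zero =>
      refine ⟨by simp [ell, consAB], ?_, ?_⟩
      · intro u hu
        have : u ∈ Azero := hu
        fin_cases this <;> simp [ell, consAB]
      · intro u hu
        have : u ∈ Bzero := hu
        fin_cases this <;> simp [ell, consAB]
  | succ k ih =>
      obtain ⟨hpos, ihA, ihB⟩ := ih
      set ℓ := ell N k with hℓ
      set A := Ak N k with hA
      set B := Bk N k with hB
      set c : List Bool := ((tupleConcat (A ∪ B) (2 ^ ℓ + 1)).sort (· ≤ ·)).flatten with hc
      set n := N (k + 1) with hn
      have hlenAB : ∀ u ∈ A ∪ B, u.length = ℓ := by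
        intro u hu
        rcases Finset.mem_union.1 hu with h | h
        · exact (ihA u h).1
        · exact (ihB u h).1
      have hclen : c.length ≤ 2 ^ ((2 ^ ℓ + 1) * ℓ) * ((2 ^ ℓ + 1) * ℓ) :=
        flatten_sort_len hlenAB
      have hnbig : 2 * c.length + 1 ≤ n := by
        have hFk := hF k
        rw [← hℓ] at hFk
        omega
      have hnpos : 0 < n := hN (k + 1)
      have hcons : consAB N (k + 1) =
          if k % 2 = 0 then
            (c.length + n * ℓ,
              A.image fun a => c ++ (List.replicate n a).flatten,
              (tupleConcat B n).image fun w => c ++ w)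
          else
            (c.length + n * ℓ,
              (tupleConcat A n).image fun w => c ++ w,
              B.image fun b => c ++ (List.replicate n b).flatten) := by
        rw [consAB]
        split_ifs <;> rfl
      have hellsucc : ell N (k + 1) = c.length + n * ℓ := by
        rw [ell, hcons]; split <;> rfl
      have hpos' : 0 < ell N (k + 1) := by
        rw [hellsucc]
        have : 0 < n * ℓ := Nat.mul_pos hnpos hpos
        omega
      refine ⟨hpos', ?_, ?_⟩
      · -- A_{k+1}
        intro u hu
        by_cases hk : k % 2 = 0
        · -- u = c ++ a^n
          have hAk : Ak N (k + 1) = A.image fun a => c ++ (List.replicate n a).flatten := by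
            rw [Ak, hcons, if_pos hk]
          rw [hAk, Finset.mem_image] at hu
          obtain ⟨a, ha, rfl⟩ := hu
          obtain ⟨ha1, ha2⟩ := ihA a ha
          constructor
          · rw [hellsucc]
            simp [List.length_append, rep_flatten_len, ha1]
          · rw [hellsucc]
            simp only [List.count_append, rep_flatten_count]
            have h1 : 2 * (n * ℓ) + n ≤ 3 * (n * a.count false) := by
              calc 2 * (n * ℓ) + n = n * (2 * ℓ + 1) := by ring
                _ ≤ n * (3 * a.count false) := Nat.mul_le_mul_left n ha2
                _ = 3 * (n * a.count false) := by ring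
            generalize n * ℓ = t at h1 ⊢
            generalize n * a.count false = s at h1 ⊢
            omega
        · -- u = c ++ w, w ∈ tupleConcat A n
          have hAk : Ak N (k + 1) = (tupleConcat A n).image fun w => c ++ w := by
            rw [Ak, hcons, if_neg hk]
          rw [hAk, Finset.mem_image] at hu
          obtain ⟨w, hw, rfl⟩ := hu
          have hw1 : w.length = n * ℓ := tc_len (fun u hu => (ihA u hu).1) n w hw
          have hw2 : n * (2 * ℓ + 1) ≤ 3 * w.count false :=
            tc_countA (fun u hu => (ihA u hu).2) n w hw
          constructor
          · rw [hellsucc]; simp [List.length_append, hw1]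
          · rw [hellsucc]
            simp only [List.count_append]
            have h1 : 2 * (n * ℓ) + n ≤ 3 * w.count false := by
              calc 2 * (n * ℓ) + n = n * (2 * ℓ + 1) := by ring
                _ ≤ 3 * w.count false := hw2
            generalize n * ℓ = t at h1 ⊢
            omega
      · -- B_{k+1}
        intro u hu
        by_cases hk : k % 2 = 0
        · have hBk : Bk N (k + 1) = (tupleConcat B n).image fun w => c ++ w := by
            rw [Bk, hcons, if_pos hk]
          rw [hBk, Finset.mem_image] at hu
          obtain ⟨w, hw, rfl⟩ := hu
          have hw1 : w.length = n * ℓ := tc_len (fun u hu => (ihB u hu).1) n w hw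
          have hw2 : 3 * w.count false + n ≤ n * ℓ :=
            tc_countB (fun u hu => (ihB u hu).2) n w hw
          have hcc : c.count false ≤ c.length := List.count_le_length
          constructor
          · rw [hellsucc]; simp [List.length_append, hw1]
          · rw [hellsucc]
            simp only [List.count_append]
            generalize n * ℓ = t at hw2 ⊢
            omega
        · have hBk : Bk N (k + 1) = B.image fun b => c ++ (List.replicate n b).flatten := by
            rw [Bk, hcons, if_neg hk]
          rw [hBk, Finset.mem_image] at hu
          obtain ⟨b, hb, rfl⟩ := hu
          obtain ⟨hb1, hb2⟩ := ihB b hb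
          have hcc : c.count false ≤ c.length := List.count_le_length
          constructor
          · rw [hellsucc]; simp [List.length_append, rep_flatten_len, hb1]
          · rw [hellsucc]
            simp only [List.count_append, rep_flatten_count]
            have h1 : 3 * (n * b.count false) + n ≤ n * ℓ := by
              calc 3 * (n * b.count false) + n = n * (3 * b.count false + 1) := by ring
                _ ≤ n * ℓ := Nat.mul_le_mul_left n hb2
            generalize n * ℓ = t at h1 ⊢
            generalize n * b.count false = s at h1 ⊢
            omega

/-- There is `F : ℕ → ℕ` so that if `N_k ≥ F(ℓ_{k-1})` for all `k ≥ 1`,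
then for every `k`, every `u ∈ A_k` has `f_0(u) > 2/3` and every `u ∈ B_k` has
`f_0(u) < 1/3`. -/
theorem stmt2 :
    ∃ F : ℕ → ℕ, ∀ N : ℕ → ℕ, (∀ k, 0 < N k) →
      (∀ k : ℕ, F (ell N k) ≤ N (k + 1)) →
      ∀ k : ℕ, (∀ u ∈ Ak N k, 2 / 3 < freq0 u) ∧ (∀ u ∈ Bk N k, freq0 u < 1 / 3) := by
  refine ⟨fun ℓ => 2 * (2 ^ ((2 ^ ℓ + 1) * ℓ) * ((2 ^ ℓ + 1) * ℓ)) + 1, ?_⟩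
  intro N hN hF k
  obtain ⟨hpos, hA, hB⟩ := key_invariant N hN hF k
  constructor
  · intro u hu
    obtain ⟨hl, hc⟩ := hA u hu
    have hlpos : (0 : ℝ) < u.length := by
      rw [hl]; exact_mod_cast hpos
    rw [freq0, div_lt_div_iff₀ (by norm_num) hlpos]
    exact_mod_cast (by omega : 2 * u.length < u.count false * 3)
  · intro u hu
    obtain ⟨hl, hc⟩ := hB u hu
    have hlpos : (0 : ℝ) < u.length := by
      rw [hl]; exact_mod_cast hpos
    rw [freq0, div_lt_div_iff₀ hlpos (by norm_num)]
    exact_mod_cast (by omega : u.count false * 3 < 1 * u.length)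

end
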